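/- Let T be the 4×4 matrix with T₁₂ = T₂₃ = T₃₄ = T₄₄ = 1 and all other entries 0, let p⁰ = (1, 0, 0, 0), let λ > 0, ω > 0, and N ≥ 4. Let h ∈ ℝ⁴ be the unique solution of the stationarity equation λ · [ Σ_{t=0}^{N−1} (p⁰(Tᵗ⁺¹ − Tᵗ) · h) · p⁰(Tᵗ⁺¹ − Tᵗ) + ω h ] = p⁰ Tᴺ − p⁰ (equivalently, the unique global maximizer of the trajectory-regularized objective). Then the components of h are strictly increasing: h₁ < h₂ < h₃ < h₄. -/

import Mathlib

open Finset Matrix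

def TT : Matrix (Fin 4) (Fin 4) ℝ := !![0, 1, 0, 0; 0, 0, 1, 0; 0, 0, 0, 1; 0, 0, 0, 1]

def PP (t : ℕ) : Fin 4 → ℝ := ![1, 0, 0, 0] ᵥ* TT ^ t

lemma TTstep (v : Fin 4 → ℝ) : v ᵥ* TT = ![0, v 0, v 1, v 2 + v 3] := by
  funext j; fin_cases j <;>
    simp [TT, Matrix.vecMul, dotProduct, Fin.sum_univ_four,
      Matrix.vecHead, Matrix.vecTail]

lemma PP0 : PP 0 = ![1, 0, 0, 0] := by simp [PP]

lemma PPsucc (t : ℕ) : PP (t + 1) = ![0, PP t 0, PP t 1, PP t 2 + PP t 3] := by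
  show ![1, 0, 0, 0] ᵥ* TT ^ (t + 1) = _
  rw [pow_succ, ← Matrix.vecMul_vecMul]
  exact TTstep _

lemma PP1 : PP 1 = ![0, 1, 0, 0] := by rw [PPsucc, PP0]; norm_num; simp
lemma PP2 : PP 2 = ![0, 0, 1, 0] := by rw [PPsucc, PP1]; norm_num; simp
lemma PP3 : PP 3 = ![0, 0, 0, 1] := by rw [PPsucc, PP2]; norm_num; simp

lemma PPbig (t : ℕ) (ht : 3 ≤ t) : PP t = ![0, 0, 0, 1] := by
  induction t, ht using Nat.le_induction with
  | base => exact PP3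
  | succ n hn ih => rw [PPsucc, ih]; norm_num; simp

lemma quad_zero (om x0 x1 x2 x3 : ℝ) (hom : 0 < om)
    (a0 : (1 + om) * x0 - x1 = 0) (a1 : -x0 + (2 + om) * x1 - x2 = 0)
    (a2 : -x1 + (2 + om) * x2 - x3 = 0) (a3 : -x2 + (1 + om) * x3 = 0) :
    x0 = 0 ∧ x1 = 0 ∧ x2 = 0 ∧ x3 = 0 := by
  have key : om * (x0 ^ 2 + x1 ^ 2 + x2 ^ 2 + x3 ^ 2)
      + (x1 - x0) ^ 2 + (x2 - x1) ^ 2 + (x3 - x2) ^ 2 = 0 := by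
    linear_combination x0 * a0 + x1 * a1 + x2 * a2 + x3 * a3
  have sq0 : x0 ^ 2 + x1 ^ 2 + x2 ^ 2 + x3 ^ 2 ≤ 0 := by
    nlinarith [sq_nonneg (x1 - x0), sq_nonneg (x2 - x1), sq_nonneg (x3 - x2),
      sq_nonneg x0, sq_nonneg x1, sq_nonneg x2, sq_nonneg x3]
  have q : ∀ x : ℝ, x ^ 2 ≤ 0 → x = 0 := fun x hx =>
    pow_eq_zero_iff two_ne_zero |>.mp (le_antisymm hx (sq_nonneg x))
  exact ⟨q x0 (by nlinarith [sq_nonneg x1, sq_nonneg x2, sq_nonneg x3]),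
    q x1 (by nlinarith [sq_nonneg x0, sq_nonneg x2, sq_nonneg x3]),
    q x2 (by nlinarith [sq_nonneg x0, sq_nonneg x1, sq_nonneg x3]),
    q x3 (by nlinarith [sq_nonneg x0, sq_nonneg x1, sq_nonneg x2])⟩

/-- Four-state irreversible chain `s₁ → s₂ → s₃ → s₄`, `ω > 0`: the stationarity
equation of the trajectory-regularized objective has a unique solution `h`, and its
components are strictly increasing: `h₁ < h₂ < h₃ < h₄`. -/
theorem stmt_12 (T : Matrix (Fin 4) (Fin 4) ℝ)
    (hT : T = !![0, 1, 0, 0; 0, 0, 1, 0; 0, 0, 0, 1; 0, 0, 0, 1])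
    (p0 : Fin 4 → ℝ) (hp0 : p0 = ![1, 0, 0, 0])
    (lam ω : ℝ) (hlam : 0 < lam) (hω : 0 < ω)
    (N : ℕ) (hN : 4 ≤ N) :
    (∃! h : Fin 4 → ℝ,
      lam • (∑ t ∈ Finset.range N,
              (((p0 ᵥ* T ^ (t + 1) - p0 ᵥ* T ^ t) ⬝ᵥ h) •
                (p0 ᵥ* T ^ (t + 1) - p0 ᵥ* T ^ t))
            + ω • h)
        = p0 ᵥ* T ^ N - p0) ∧
    (∀ h : Fin 4 → ℝ,
      (lam • (∑ t ∈ Finset.range N,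
              (((p0 ᵥ* T ^ (t + 1) - p0 ᵥ* T ^ t) ⬝ᵥ h) •
                (p0 ᵥ* T ^ (t + 1) - p0 ᵥ* T ^ t))
            + ω • h)
        = p0 ᵥ* T ^ N - p0) →
      h 0 < h 1 ∧ h 1 < h 2 ∧ h 2 < h 3) := by
  subst hT hp0
  -- the sum over `range N` collapses to its first three terms
  have hsum : ∀ h : Fin 4 → ℝ,
      ∑ t ∈ Finset.range N, ((PP (t + 1) - PP t) ⬝ᵥ h) • (PP (t + 1) - PP t)
        = ((PP 1 - PP 0) ⬝ᵥ h) • (PP 1 - PP 0) + ((PP 2 - PP 1) ⬝ᵥ h) • (PP 2 - PP 1)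
          + ((PP 3 - PP 2) ⬝ᵥ h) • (PP 3 - PP 2) := by
    intro h
    rw [← Finset.sum_range_add_sum_Ico _ (show 3 ≤ N by omega)]
    have hz : ∑ t ∈ Finset.Ico 3 N, ((PP (t + 1) - PP t) ⬝ᵥ h) • (PP (t + 1) - PP t) = 0 := by
      refine Finset.sum_eq_zero fun t ht => ?_
      have h3 := (Finset.mem_Ico.mp ht).1
      rw [PPbig (t + 1) (by omega), PPbig t h3, sub_self]
      simp
    rw [hz, add_zero, Finset.sum_range_succ, Finset.sum_range_succ, Finset.sum_range_succ,
      Finset.sum_range_zero, zero_add]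
  -- characterization of the stationarity equation by four scalar equations
  have vec : ∀ h : Fin 4 → ℝ,
      (lam • (∑ t ∈ Finset.range N, ((PP (t + 1) - PP t) ⬝ᵥ h) • (PP (t + 1) - PP t) + ω • h)
        = PP N - ![1, 0, 0, 0]) ↔
      (lam * ((1 + ω) * h 0 - h 1) = -1 ∧ lam * (-h 0 + (2 + ω) * h 1 - h 2) = 0 ∧
       lam * (-h 1 + (2 + ω) * h 2 - h 3) = 0 ∧ lam * (-h 2 + (1 + ω) * h 3) = 1) := by
    intro h
    rw [hsum h, PPbig N (by omega), PP0, PP1, PP2, PP3]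
    have lhs_eq :
        lam • (((![0,1,0,0] - ![1,0,0,0]) ⬝ᵥ h) • (![(0:ℝ),1,0,0] - ![1,0,0,0])
            + ((![0,0,1,0] - ![0,1,0,0]) ⬝ᵥ h) • (![(0:ℝ),0,1,0] - ![0,1,0,0])
            + ((![0,0,0,1] - ![0,0,1,0]) ⬝ᵥ h) • (![(0:ℝ),0,0,1] - ![0,0,1,0])
            + ω • h)
          = ![lam * ((1 + ω) * h 0 - h 1), lam * (-h 0 + (2 + ω) * h 1 - h 2),
              lam * (-h 1 + (2 + ω) * h 2 - h 3), lam * (-h 2 + (1 + ω) * h 3)] := by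
      funext i; fin_cases i <;>
        (simp [dotProduct, Fin.sum_univ_four, Matrix.vecHead, Matrix.vecTail,
          -mul_eq_mul_left_iff, show (Fin.succ 2 : Fin 4) = 3 by rfl]; ring)
    have rhs_eq : (![(0:ℝ),0,0,1] - ![1,0,0,0]) = ![(-1:ℝ), 0, 0, 1] := by
      funext i; fin_cases i <;> simp
    rw [lhs_eq, rhs_eq]
    constructor
    · intro he
      exact ⟨by simpa using congrFun he 0, by simpa using congrFun he 1,
        by simpa using congrFun he 2, by simpa using congrFun he 3⟩
    · rintro ⟨e0, e1, e2, e3⟩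
      funext i
      fin_cases i
      · simpa using e0
      · simpa using e1
      · simpa using e2
      · simpa using e3
  -- the explicit solution
  have hD : (0:ℝ) < ω ^ 2 + 4 * ω + 2 := by nlinarith
  have hc : (0:ℝ) < lam * (ω ^ 2 + 4 * ω + 2) := mul_pos hlam hD
  set c : ℝ := lam * (ω ^ 2 + 4 * ω + 2) with hcdef
  set hs : Fin 4 → ℝ := ![-(3 + ω) / c, -1 / c, 1 / c, (3 + ω) / c] with hsdef
  have hs0 : hs 0 = -(3 + ω) / c := rfl
  have hs1 : hs 1 = -1 / c := rfl
  have hs2 : hs 2 = 1 / c := rfl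
  have hs3 : hs 3 = (3 + ω) / c := rfl
  have hcne : c ≠ 0 := hc.ne'
  have hlne : lam ≠ 0 := hlam.ne'
  have hs_eqs : lam * ((1 + ω) * hs 0 - hs 1) = -1 ∧ lam * (-hs 0 + (2 + ω) * hs 1 - hs 2) = 0 ∧
      lam * (-hs 1 + (2 + ω) * hs 2 - hs 3) = 0 ∧ lam * (-hs 2 + (1 + ω) * hs 3) = 1 := by
    rw [hs0, hs1, hs2, hs3, hcdef]
    refine ⟨?_, ?_, ?_, ?_⟩ <;> (field_simp; ring_nf) <;> try tauto
  -- uniqueness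
  have uniq : ∀ g : Fin 4 → ℝ,
      (lam * ((1 + ω) * g 0 - g 1) = -1 ∧ lam * (-g 0 + (2 + ω) * g 1 - g 2) = 0 ∧
       lam * (-g 1 + (2 + ω) * g 2 - g 3) = 0 ∧ lam * (-g 2 + (1 + ω) * g 3) = 1) → g = hs := by
    intro g ⟨f0, f1, f2, f3⟩
    obtain ⟨e0, e1, e2, e3⟩ := hs_eqs
    have a0 : (1 + ω) * (g 0 - hs 0) - (g 1 - hs 1) = 0 := by
      have := mul_left_cancel₀ hlne (f0.trans e0.symm); linarith
    have a1 : -(g 0 - hs 0) + (2 + ω) * (g 1 - hs 1) - (g 2 - hs 2) = 0 := by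
      have := mul_left_cancel₀ hlne (f1.trans e1.symm); linarith
    have a2 : -(g 1 - hs 1) + (2 + ω) * (g 2 - hs 2) - (g 3 - hs 3) = 0 := by
      have := mul_left_cancel₀ hlne (f2.trans e2.symm); linarith
    have a3 : -(g 2 - hs 2) + (1 + ω) * (g 3 - hs 3) = 0 := by
      have := mul_left_cancel₀ hlne (f3.trans e3.symm); linarith
    obtain ⟨z0, z1, z2, z3⟩ := quad_zero ω _ _ _ _ hω a0 a1 a2 a3
    funext i
    fin_cases i
    · exact sub_eq_zero.mp z0
    · exact sub_eq_zero.mp z1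
    · exact sub_eq_zero.mp z2
    · exact sub_eq_zero.mp z3
  -- h⋆ is strictly increasing
  have mono : hs 0 < hs 1 ∧ hs 1 < hs 2 ∧ hs 2 < hs 3 := by
    rw [hs0, hs1, hs2, hs3]
    refine ⟨?_, ?_, ?_⟩ <;> (rw [div_lt_div_iff_of_pos_right hc] <;> linarith)
  refine ⟨⟨hs, (vec hs).mpr hs_eqs, fun g hg => uniq g ((vec g).mp hg)⟩, fun h hh => ?_⟩
  have : h = hs := uniq h ((vec h).mp hh)
  rw [this]
  exact mono
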